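/- Let R be a commutative ring and S a commutative, associative, unital R-algebra which is free as an R-module with basis (1, α, β), and suppose there are elements f₀, f₁, f₂, f₃, g₀, g₁, g₂ ∈ R such that the multiplication satisfies α·β = −g₀·1, α² = −g₁·1 + f₂·α − f₃·β, and β² = −g₂·1 + f₀·α − f₁·β. Then necessarily g₀ = f₀f₃, g₁ = f₁f₃, and g₂ = f₀f₂. -/

import Mathlib

/-- Let `R` be a commutative ring and `S` a commutative associative unital `R`-algebra
that is free with basis `(1, α, β)`, and suppose the multiplication table is
`α·β = −g₀·1`, `α² = −g₁·1 + f₂·α − f₃·β`, `β² = −g₂·1 + f₀·α − f₁·β`.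
Then necessarily `g₀ = f₀f₃`, `g₁ = f₁f₃` and `g₂ = f₀f₂`. -/
theorem stmt_3 (R S : Type*) [CommRing R] [CommRing S] [Algebra R S]
    (b : Module.Basis (Fin 3) R S) (hb0 : b 0 = 1)
    (f₀ f₁ f₂ f₃ g₀ g₁ g₂ : R)
    (hαβ : b 1 * b 2 = algebraMap R S (-g₀))
    (hα2 : b 1 * b 1 = algebraMap R S (-g₁) + f₂ • b 1 - f₃ • b 2)
    (hβ2 : b 2 * b 2 = algebraMap R S (-g₂) + f₀ • b 1 - f₁ • b 2) :
    g₀ = f₀ * f₃ ∧ g₁ = f₁ * f₃ ∧ g₂ = f₀ * f₂ := by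
  have hb0' : (1:S) = b 0 := hb0.symm
  have key1 : (b 1 * b 1) * b 2 = b 1 * (b 1 * b 2) := mul_assoc _ _ _
  have key2 : (b 1 * b 2) * b 2 = b 1 * (b 2 * b 2) := mul_assoc _ _ _
  simp only [hαβ, hα2, hβ2, Algebra.algebraMap_eq_smul_one, sub_mul, add_mul, mul_sub, mul_add,
    smul_mul_assoc, mul_smul_comm, one_mul, mul_one, hαβ, hα2, hβ2, smul_add, smul_sub,
    smul_smul, hb0'] at key1 key2
  have h02 : b 0 * b 2 = b 2 := by rw [hb0, one_mul]
  have h10 : b 1 * b 0 = b 1 := by rw [hb0, mul_one]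
  rw [h02, h10] at key1 key2
  have e1 := congrArg (fun x => b.repr x 1) key1
  have e2 := congrArg (fun x => b.repr x 2) key1
  have e3 := congrArg (fun x => b.repr x 1) key2
  simp [Finsupp.single_apply] at e1 e2 e3
  exact ⟨by linear_combination -e1, by linear_combination -e2, by linear_combination e3⟩
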